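/- Every maximal isotropic subgroup of a finite symplectic ℤ-module has order equal to the square root of the order of the module: let G be a finite abelian group equipped with a symplectic form ω, and let H ≤ G be a maximal isotropic subgroup. Then H equals its own orthogonal complement H^⊥ = {g ∈ G : ω(g,h) = 0 for all h ∈ H}, and |H|² = |G|. -/

import Mathlib

noncomputable def ratCircleToRealCircle : AddCircle (1 : ℚ) →+ AddCircle (1 : ℝ) :=
  QuotientAddGroup.map _ _ (Rat.castHom ℝ).toAddMonoidHom (by
    intro x hx
    obtain ⟨n, rfl⟩ := AddSubgroup.mem_zmultiples_iff.mp hx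
    refine AddSubgroup.mem_comap.mpr (AddSubgroup.mem_zmultiples_iff.mpr ⟨n, ?_⟩)
    simp)

lemma ratCircleToRealCircle_injective : Function.Injective ratCircleToRealCircle := by
  intro x y h
  induction x using QuotientAddGroup.induction_on with | H a => ?_
  induction y using QuotientAddGroup.induction_on with | H b => ?_
  simp only [ratCircleToRealCircle, QuotientAddGroup.map_mk] at h
  rw [QuotientAddGroup.eq] at h ⊢
  obtain ⟨n, hn⟩ := AddSubgroup.mem_zmultiples_iff.mp h
  refine AddSubgroup.mem_zmultiples_iff.mpr ⟨n, ?_⟩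
  have : ((n • (1:ℚ) : ℚ) : ℝ) = ((-a + b : ℚ) : ℝ) := by push_cast; simpa using hn
  exact_mod_cast this

noncomputable def charToAddChar {A : Type*} [AddCommGroup A] (c : CharacterModule A) :
    AddChar A ℂ where
  toFun a := (AddCircle.toCircle (ratCircleToRealCircle (c a)) : ℂ)
  map_zero_eq_one' := by simp
  map_add_eq_mul' := fun a b => by
    show ((AddCircle.toCircle (ratCircleToRealCircle (c (a + b))) : Circle) : ℂ) = _
    rw [map_add, map_add, AddCircle.toCircle_add, Circle.coe_mul]

lemma charToAddChar_injective {A : Type*} [AddCommGroup A] :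
    Function.Injective (charToAddChar (A := A)) := by
  intro c c' h
  ext a
  have h1 : ((AddCircle.toCircle (ratCircleToRealCircle (c a)) : ℂ)) =
      ((AddCircle.toCircle (ratCircleToRealCircle (c' a)) : ℂ)) := by
    simpa [charToAddChar] using DFunLike.congr_fun h a
  exact ratCircleToRealCircle_injective
    (AddCircle.injective_toCircle one_ne_zero (Subtype.coe_injective h1))

lemma finite_characterModule (A : Type*) [AddCommGroup A] [Finite A] :
    Finite (CharacterModule A) :=
  Finite.of_injective _ (charToAddChar_injective (A := A))

lemma card_characterModule_le (A : Type*) [AddCommGroup A] [Finite A] :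
    Nat.card (CharacterModule A) ≤ Nat.card A := by
  cases nonempty_fintype A
  have := finite_characterModule A
  calc Nat.card (CharacterModule A) ≤ Nat.card (AddChar A ℂ) :=
        Nat.card_le_card_of_injective _ charToAddChar_injective
  _ ≤ Nat.card A := by
      simp only [Nat.card_eq_fintype_card]
      exact AddChar.card_addChar_le A ℂ

/-- A symplectic form on a finite abelian group, valued in ℚ/ℤ :
ℤ-bilinear, alternating and nondegenerate. -/
structure IsSymplecticForm {G : Type*} [AddCommGroup G]
    (ω : G → G → AddCircle (1 : ℚ)) : Prop where
  add_left : ∀ x x' y : G, ω (x + x') y = ω x y + ω x' y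
  add_right : ∀ x y y' : G, ω x (y + y') = ω x y + ω x y'
  alternating : ∀ x : G, ω x x = 0
  nondeg : ∀ x : G, (∀ y : G, ω x y = 0) → x = 0

/-- A subgroup is isotropic for `ω` if `ω` vanishes identically on it. -/
def IsIsotropic {G : Type*} [AddCommGroup G]
    (ω : G → G → AddCircle (1 : ℚ)) (H : AddSubgroup G) : Prop :=
  ∀ x ∈ H, ∀ y ∈ H, ω x y = 0

/-- A maximal isotropic subgroup: isotropic and not properly contained in any
isotropic subgroup. -/
def IsMaximalIsotropic {G : Type*} [AddCommGroup G]
    (ω : G → G → AddCircle (1 : ℚ)) (H : AddSubgroup G) : Prop :=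
  IsIsotropic ω H ∧ ∀ K : AddSubgroup G, IsIsotropic ω K → H ≤ K → K = H

/-- A maximal isotropic subgroup of a finite symplectic ℤ-module equals its own
orthogonal complement, and its order is the square root of the order of the module. -/
theorem maximal_isotropic_card_sq_eq_card
    {G : Type*} [AddCommGroup G] [Fintype G]
    (ω : G → G → AddCircle (1 : ℚ)) (hω : IsSymplecticForm ω)
    (H : AddSubgroup G) (hH : IsMaximalIsotropic ω H) :
    {g : G | ∀ h ∈ H, ω g h = 0} = (H : Set G) ∧
    Nat.card H ^ 2 = Nat.card G := by
  obtain ⟨hiso, hmax⟩ := hH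
  set Φ : G →+ G →+ AddCircle (1 : ℚ) :=
    AddMonoidHom.mk' (fun g => AddMonoidHom.mk' (ω g) (fun y y' => hω.add_right g y y'))
      (fun x x' => AddMonoidHom.ext fun y => hω.add_left x x' y) with hΦ
  have hΦω : ∀ x y : G, Φ x y = ω x y := fun _ _ => rfl
  have skew : ∀ x y : G, ω y x = - ω x y := by
    intro x y
    have h := hω.alternating (x + y)
    rw [hω.add_left, hω.add_right, hω.add_right, hω.alternating, hω.alternating] at h
    have h' : ω x y + ω y x = 0 := by
      rw [← h]; abel
    exact eq_neg_of_add_eq_zero_right h'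
  have hperp : {g : G | ∀ h ∈ H, ω g h = 0} = (H : Set G) := by
    ext g
    constructor
    · intro hg
      have hK : IsIsotropic ω (H ⊔ AddSubgroup.zmultiples g) := by
        intro x hx y hy
        rw [AddSubgroup.mem_sup] at hx hy
        obtain ⟨h1, hh1, k1, hk1, rfl⟩ := hx
        obtain ⟨h2, hh2, k2, hk2, rfl⟩ := hy
        obtain ⟨n, rfl⟩ := AddSubgroup.mem_zmultiples_iff.mp hk1
        obtain ⟨m, rfl⟩ := AddSubgroup.mem_zmultiples_iff.mp hk2
        have hgh1 : ω h1 g = 0 := by rw [skew g h1, hg h1 hh1, neg_zero]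
        rw [← hΦω]
        simp only [map_add, map_zsmul, AddMonoidHom.add_apply, AddMonoidHom.smul_apply,
          hΦω, hiso h1 hh1 h2 hh2, hgh1, hg h2 hh2, hω.alternating, smul_zero, add_zero, zero_add]
      have hKH := hmax _ hK le_sup_left
      have : g ∈ H ⊔ AddSubgroup.zmultiples g :=
        AddSubgroup.mem_sup_right (AddSubgroup.mem_zmultiples g)
      rw [hKH] at this
      exact this
    · intro hg h hh
      exact hiso g hg h hh
  refine ⟨hperp, ?_⟩
  -- the map G → CharacterModule H, with kernel H
  let φ : G →+ CharacterModule ↥H :=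
    { toFun := fun g => (Φ g).comp H.subtype
      map_zero' := by ext h; simp; rfl
      map_add' := fun a b => by
        refine AddMonoidHom.ext fun h => ?_
        show Φ (a + b) h = ((Φ a).comp H.subtype + (Φ b).comp H.subtype) h
        rw [map_add, AddMonoidHom.add_apply, AddMonoidHom.add_apply]
        rfl }
  have hker : φ.ker = H := by
    ext g
    rw [AddMonoidHom.mem_ker]
    constructor
    · intro h0
      have : ∀ h ∈ H, ω g h = 0 := by
        intro h hh
        have := DFunLike.congr_fun h0 (⟨h, hh⟩ : ↥H)
        exact this
      have hg' : g ∈ {g : G | ∀ h ∈ H, ω g h = 0} := this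
      rw [hperp] at hg'
      exact hg'
    · intro hg
      ext h
      have : ∀ h ∈ H, ω g h = 0 := by rw [← Set.mem_setOf_eq (p := fun g => ∀ h ∈ H, ω g h = 0), hperp]; exact hg
      exact this h h.2
  haveI : Finite (CharacterModule ↥H) := finite_characterModule _
  haveI : Finite (CharacterModule (G ⧸ H)) := finite_characterModule _
  have h1 : Nat.card (G ⧸ H) ≤ Nat.card ↥H := by
    calc Nat.card (G ⧸ H) = Nat.card (G ⧸ φ.ker) := by rw [hker]
    _ ≤ Nat.card (CharacterModule ↥H) :=
        Nat.card_le_card_of_injective _ (QuotientAddGroup.kerLift_injective φ)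
    _ ≤ Nat.card ↥H := card_characterModule_le _
  have h2 : Nat.card ↥H ≤ Nat.card (G ⧸ H) := by
    let f : ↥H → CharacterModule (G ⧸ H) := fun h =>
      QuotientAddGroup.lift H (Φ h) (fun x hx => hiso h h.2 x hx)
    have hf : Function.Injective f := by
      intro a b hab
      have hval : ∀ y : G, ω (a : G) y = ω (b : G) y := by
        intro y
        have := DFunLike.congr_fun hab ((y : G ⧸ H))
        exact this
      have : ((a : G) - b) = 0 := by
        apply hω.nondeg
        intro y
        rw [← hΦω]
        rw [map_sub]
        simp only [AddMonoidHom.sub_apply, hΦω, hval y, sub_self]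
      exact Subtype.ext (sub_eq_zero.mp this)
    calc Nat.card ↥H ≤ Nat.card (CharacterModule (G ⧸ H)) :=
        Nat.card_le_card_of_injective f hf
    _ ≤ Nat.card (G ⧸ H) := card_characterModule_le _
  have heq : Nat.card (G ⧸ H) = Nat.card ↥H := le_antisymm h1 h2
  rw [AddSubgroup.card_eq_card_quotient_mul_card_addSubgroup H, heq, sq]
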